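/- In the purely metric scalar-tensor theory, the quantity F_M(Φ)² = (2A(Φ)B(Φ) + 3A'(Φ)²)/(4A(Φ)²) transforms under the transformation rules Ā(x) = e^{2γ(x)}A(f(x)) and B̄(x) = e^{2γ(x)}((f'(x))² B(f(x)) − 6γ'(x)² A(f(x)) − 6γ'(x) A'(f(x)) f'(x)) as F̄_M(x)² = F_M(f(x))² · f'(x)², i.e. the algebraic identity 2ĀB̄ + 3(Ā')² = e^{4γ}(f')²·(2(A∘f)(B∘f) + 3(A'∘f)²) holds. -/

import Mathlib

open Real in
/-- Metric scalar-tensor identity: 2ĀB̄ + 3(Ā')² = e^{4γ}(f')²(2(A∘f)(B∘f) + 3(A'∘f)²). -/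
theorem metric_F_transformation
    (A B γ f Abar Bbar : ℝ → ℝ)
    (hA : Differentiable ℝ A) (hγ : Differentiable ℝ γ) (hf : Differentiable ℝ f)
    (hAbar : ∀ x, Abar x = exp (2 * γ x) * A (f x))
    (hBbar : ∀ x, Bbar x = exp (2 * γ x) *
      ((deriv f x) ^ 2 * B (f x) - 6 * (deriv γ x) ^ 2 * A (f x)
        - 6 * deriv γ x * deriv A (f x) * deriv f x)) :
    ∀ x, 2 * Abar x * Bbar x + 3 * (deriv Abar x) ^ 2
      = exp (4 * γ x) * (deriv f x) ^ 2 *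
          (2 * A (f x) * B (f x) + 3 * (deriv A (f x)) ^ 2) := by
  intro x
  have hd : deriv Abar x
      = exp (2 * γ x) * (2 * deriv γ x) * A (f x)
        + exp (2 * γ x) * (deriv A (f x) * deriv f x) := by
    have h1 : HasDerivAt (fun x => exp (2 * γ x)) (exp (2 * γ x) * (2 * deriv γ x)) x :=
      (((hγ x).hasDerivAt.const_mul 2).exp)
    have h2 : HasDerivAt (fun x => A (f x)) (deriv A (f x) * deriv f x) x :=
      (hA (f x)).hasDerivAt.comp x (hf x).hasDerivAt
    have h3 : HasDerivAt (fun x => exp (2 * γ x) * A (f x)) _ x := h1.mul h2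
    have : Abar = fun x => exp (2 * γ x) * A (f x) := funext hAbar
    rw [this, h3.deriv]
  rw [hAbar, hBbar, hd, show (4:ℝ) * γ x = 2 * γ x + 2 * γ x by ring, exp_add]
  ring
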